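/- arXiv:2109.14604 — 2 statements merged into one kernel-verified Lean document; each statement's English description precedes it below -/
import Mathlib

section
/- If n = 3f+1 and a block b was voted for by at least 2f+1 nodes (of which at least f+1 are honest), then in any set S of 2f+1 nodes responding to a payload-retrieval request, at least one honest responder possesses the payload of b. -/
/-- If block b was voted for by at least 2f+1 nodes (honest voters store b's
payload), then any set of 2f+1 responders to a payload-retrieval request
contains an honest responder possessing b's payload. -/
theorem payload_retrieval {α : Type*} [DecidableEq α] (f : ℕ)
    (N B V S : Finset α)
    (hN : N.card = 3 * f + 1)
    (hB : B ⊆ N) (hBcard : B.card ≤ f)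
    (hasPayload : α → Prop)
    (hV : V ⊆ N) (hVcard : 2 * f + 1 ≤ V.card)
    (hstore : ∀ i ∈ V, i ∉ B → hasPayload i)
    (hS : S ⊆ N) (hScard : S.card = 2 * f + 1) :
    ∃ i ∈ S, i ∉ B ∧ hasPayload i := by
  have hunion : (V ∪ S).card ≤ 3 * f + 1 := hN ▸ Finset.card_le_card (Finset.union_subset hV hS)
  have hint : f + 1 ≤ (V ∩ S).card := by
    have := Finset.card_inter_add_card_union V S
    omega
  have hdiff : 0 < ((V ∩ S) \ B).card := by
    have := Finset.card_le_card_sdiff_add_card (s := V ∩ S) (t := B)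
    omega
  obtain ⟨i, hi⟩ := Finset.card_pos.mp hdiff
  simp only [Finset.mem_sdiff, Finset.mem_inter] at hi
  exact ⟨i, hi.1.2, hi.2, hstore i hi.1.1 hi.2⟩
end

section
/- If n = 3f+1, a block b is committed by at least f+1 honest nodes, and a conflicting block b' at the same sequence receives votes from a set of at least 2f+1 nodes, then some honest node voted for both b and b', a contradiction; hence a block committed by at least f+1 honest nodes can never be revoked in favor of a conflicting block. -/
/-- A block committed by at least f+1 honest nodes can never be revoked in
favor of a conflicting block: if a conflicting block b' at the same sequence
also gathers 2f+1 votes, some honest node would have voted for both, which is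
impossible. -/
theorem committed_block_irrevocable {α β : Type*} [DecidableEq α] (f : ℕ)
    (N B : Finset α)
    (hN : N.card = 3 * f + 1)
    (hB : B ⊆ N) (hBcard : B.card ≤ f)
    (voted : α → ℕ → β → Prop)
    (honest_single_vote : ∀ i ∈ N, i ∉ B → ∀ s b b', voted i s b → voted i s b' → b = b')
    (s : ℕ) (b b' : β) (hne : b ≠ b')
    (V V' : Finset α) (hVN : V ⊆ N) (hV'N : V' ⊆ N)
    (hV : ∀ i ∈ V, voted i s b) (hV' : ∀ i ∈ V', voted i s b')
    (hVcard : 2 * f + 1 ≤ V.card) (hV'card : 2 * f + 1 ≤ V'.card) :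
    False := by
  have hunion : (V ∪ V').card ≤ 3 * f + 1 := hN ▸ Finset.card_le_card (Finset.union_subset hVN hV'N)
  have hinter : f + 1 ≤ (V ∩ V').card := by
    have := Finset.card_union_add_card_inter V V'
    omega
  have hsub : ¬ (V ∩ V' ⊆ B) := fun h => by
    have := Finset.card_le_card h; omega
  obtain ⟨i, hi, hiB⟩ := Finset.not_subset.mp hsub
  have hiV := Finset.mem_inter.mp hi
  exact hne (honest_single_vote i (hVN hiV.1) hiB s b b' (hV i hiV.1) (hV' i hiV.2))
end
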